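/- If A ∈ M_{m×m}(ℝ) and B ∈ M_{p×p}(ℝ) are square invertible matrices, then their semi-tensor product A ⋉ B ∈ M_{t×t}(ℝ), where t = lcm(m,p), is invertible and (A ⋉ B)⁻¹ = B⁻¹ ⋉ A⁻¹. -/

import Mathlib

open Matrix

/-- Kronecker product of real matrices, with `Fin`-indices flattened
lexicographically (entry at row `(i-1)p+k`, column `(j-1)q+l` is `A i j * B k l`). -/
noncomputable def fkron {m n p q : ℕ} (A : Matrix (Fin m) (Fin n) ℝ)
    (B : Matrix (Fin p) (Fin q) ℝ) : Matrix (Fin (m * p)) (Fin (n * q)) ℝ :=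
  Matrix.reindex finProdFinEquiv finProdFinEquiv (Matrix.kroneckerMap (· * ·) A B)

/-- The semi-tensor product `A ⋉ B = (A ⊗ I_{t/n})(B ⊗ I_{t/p})`, `t = lcm(n,p)`. -/
noncomputable def stp {m n p q : ℕ} (A : Matrix (Fin m) (Fin n) ℝ)
    (B : Matrix (Fin p) (Fin q) ℝ) :
    Matrix (Fin (m * (Nat.lcm n p / n))) (Fin (q * (Nat.lcm n p / p))) ℝ :=
  fkron A (1 : Matrix (Fin (Nat.lcm n p / n)) (Fin (Nat.lcm n p / n)) ℝ) *
    Matrix.reindex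
      (finCongr (show p * (Nat.lcm n p / p) = n * (Nat.lcm n p / n) by
        rw [Nat.mul_div_cancel' (Nat.dvd_lcm_right n p),
          Nat.mul_div_cancel' (Nat.dvd_lcm_left n p)]))
      (Equiv.refl _)
      (fkron B (1 : Matrix (Fin (Nat.lcm n p / p)) (Fin (Nat.lcm n p / p)) ℝ))

/-- The semi-tensor product `A ⋉ B` of square matrices `A ∈ M_{m×m}`, `B ∈ M_{p×p}`,
viewed as a `t × t` matrix, `t = lcm(m,p)`. -/
noncomputable def stpSq {m p : ℕ} (A : Matrix (Fin m) (Fin m) ℝ)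
    (B : Matrix (Fin p) (Fin p) ℝ) :
    Matrix (Fin (Nat.lcm m p)) (Fin (Nat.lcm m p)) ℝ :=
  Matrix.reindex
    (finCongr (Nat.mul_div_cancel' (Nat.dvd_lcm_left m p)))
    (finCongr (Nat.mul_div_cancel' (Nat.dvd_lcm_right m p)))
    (stp A B)

lemma fkron_mul {m n q a : ℕ} (A : Matrix (Fin m) (Fin n) ℝ) (B : Matrix (Fin n) (Fin q) ℝ) :
    fkron A (1 : Matrix (Fin a) (Fin a) ℝ) * fkron B (1 : Matrix (Fin a) (Fin a) ℝ)
      = fkron (A * B) (1 : Matrix (Fin a) (Fin a) ℝ) := by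
  unfold fkron
  rw [Matrix.reindex_apply, Matrix.reindex_apply, Matrix.reindex_apply,
    Matrix.submatrix_mul_equiv, ← Matrix.mul_kronecker_mul, Matrix.one_mul]

lemma fkron_one {m a : ℕ} :
    fkron (1 : Matrix (Fin m) (Fin m) ℝ) (1 : Matrix (Fin a) (Fin a) ℝ) = 1 := by
  unfold fkron
  rw [Matrix.one_kronecker_one, Matrix.reindex_apply, Matrix.submatrix_one_equiv]

lemma prodOne {t m p a b : ℕ} (ha : t = m * a) (hb : t = p * b)
    (A A' : Matrix (Fin m) (Fin m) ℝ) (B B' : Matrix (Fin p) (Fin p) ℝ)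
    (hA : A * A' = 1) (hB : B * B' = 1) :
    ((fkron A (1 : Matrix (Fin a) (Fin a) ℝ)).submatrix (finCongr ha) (finCongr ha) *
     (fkron B (1 : Matrix (Fin b) (Fin b) ℝ)).submatrix (finCongr hb) (finCongr hb)) *
    ((fkron B' (1 : Matrix (Fin b) (Fin b) ℝ)).submatrix (finCongr hb) (finCongr hb) *
     (fkron A' (1 : Matrix (Fin a) (Fin a) ℝ)).submatrix (finCongr ha) (finCongr ha)) = 1 := by
  rw [mul_assoc, ← mul_assoc ((fkron B _).submatrix _ _),
    Matrix.submatrix_mul_equiv, fkron_mul, hB, fkron_one, Matrix.submatrix_one_equiv, one_mul,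
    Matrix.submatrix_mul_equiv, fkron_mul, hA, fkron_one, Matrix.submatrix_one_equiv]

lemma stpSq_eq {m p : ℕ} (A : Matrix (Fin m) (Fin m) ℝ) (B : Matrix (Fin p) (Fin p) ℝ)
    (h1 : Nat.lcm m p = m * (Nat.lcm m p / m)) (h2 : Nat.lcm m p = p * (Nat.lcm m p / p)) :
    stpSq A B =
      (fkron A (1 : Matrix (Fin (Nat.lcm m p / m)) (Fin (Nat.lcm m p / m)) ℝ)).submatrix
        (finCongr h1) (finCongr h1) *
      (fkron B (1 : Matrix (Fin (Nat.lcm m p / p)) (Fin (Nat.lcm m p / p)) ℝ)).submatrix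
        (finCongr h2) (finCongr h2) := by
  unfold stpSq stp
  rw [Matrix.reindex_apply, Matrix.reindex_apply,
    ← Matrix.submatrix_mul_equiv _ _ _ (finCongr h1) _, Matrix.submatrix_submatrix]
  congr 1

lemma prodOne2 {t m p a b a' b' : ℕ} (ha : t = m * a) (hb : t = p * b)
    (ha' : t = m * a') (hb' : t = p * b') (haa : a = a') (hbb : b = b')
    (A A' : Matrix (Fin m) (Fin m) ℝ) (B B' : Matrix (Fin p) (Fin p) ℝ)
    (hA : A * A' = 1) (hB : B * B' = 1) :
    ((fkron A (1 : Matrix (Fin a) (Fin a) ℝ)).submatrix (finCongr ha) (finCongr ha) *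
     (fkron B (1 : Matrix (Fin b) (Fin b) ℝ)).submatrix (finCongr hb) (finCongr hb)) *
    ((fkron B' (1 : Matrix (Fin b') (Fin b')  ℝ)).submatrix (finCongr hb') (finCongr hb') *
     (fkron A' (1 : Matrix (Fin a') (Fin a') ℝ)).submatrix (finCongr ha') (finCongr ha')) = 1 := by
  subst haa; subst hbb
  exact prodOne ha hb A A' B B' hA hB

/-- If `A ∈ M_{m×m}(ℝ)` and `B ∈ M_{p×p}(ℝ)` are invertible, then `A ⋉ B ∈ M_{t×t}(ℝ)`,
`t = lcm(m,p)`, is invertible and `(A ⋉ B)⁻¹ = B⁻¹ ⋉ A⁻¹`. -/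
theorem stp_inv {m p : ℕ} (A : Matrix (Fin m) (Fin m) ℝ) (B : Matrix (Fin p) (Fin p) ℝ)
    (hA : IsUnit A) (hB : IsUnit B) :
    IsUnit (stpSq A B) ∧
      (stpSq A B)⁻¹ = (stpSq B⁻¹ A⁻¹).submatrix
        (Fin.cast (Nat.lcm_comm m p)) (Fin.cast (Nat.lcm_comm m p)) := by
  have h1 : Nat.lcm m p = m * (Nat.lcm m p / m) :=
    (Nat.mul_div_cancel' (Nat.dvd_lcm_left m p)).symm
  have h2 : Nat.lcm m p = p * (Nat.lcm m p / p) :=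
    (Nat.mul_div_cancel' (Nat.dvd_lcm_right m p)).symm
  have h1' : Nat.lcm p m = p * (Nat.lcm p m / p) :=
    (Nat.mul_div_cancel' (Nat.dvd_lcm_left p m)).symm
  have h2' : Nat.lcm p m = m * (Nat.lcm p m / m) :=
    (Nat.mul_div_cancel' (Nat.dvd_lcm_right p m)).symm
  have hAm : A * A⁻¹ = 1 := Matrix.mul_nonsing_inv A ((Matrix.isUnit_iff_isUnit_det A).mp hA)
  have hBm : B * B⁻¹ = 1 := Matrix.mul_nonsing_inv B ((Matrix.isUnit_iff_isUnit_det B).mp hB)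
  have hCD : stpSq A B * (stpSq B⁻¹ A⁻¹).submatrix
      (Fin.cast (Nat.lcm_comm m p)) (Fin.cast (Nat.lcm_comm m p)) = 1 := by
    rw [stpSq_eq A B h1 h2, stpSq_eq B⁻¹ A⁻¹ h1' h2',
      ← Matrix.submatrix_mul_equiv _ _ _ (finCongr (Nat.lcm_comm m p)) _]
    exact prodOne2 h1 h2
      (by rw [Nat.lcm_comm m p]; exact h2')
      (by rw [Nat.lcm_comm m p]; exact h1')
      (by rw [Nat.lcm_comm m p]) (by rw [Nat.lcm_comm m p]) A A⁻¹ B B⁻¹ hAm hBm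
  refine ⟨?_, Matrix.inv_eq_right_inv hCD⟩
  exact (Matrix.isUnit_iff_isUnit_det _).mpr
    (IsUnit.of_mul_eq_one _ (by rw [← Matrix.det_mul, hCD, Matrix.det_one]))
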